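/- For a parameter ideal I = (x_1,...,x_i) in a Noetherian local ring (R,m), an element z lies in the limit closure I^lim if and only if the class [z/(x_1⋯x_i)] in the Čech (local) cohomology module H_I^i(R) is zero. -/
import Mathlib


noncomputable section

/-- The ideal `(x_1^{s+1},…,x_i^{s+1})`. -/
def paramPowerIdeal {R : Type*} [CommRing R] {i : ℕ} (x : Fin i → R) (s : ℕ) : Ideal R :=
  Ideal.span (Set.range fun j => x j ^ (s + 1))

lemma paramPowerIdeal_le_comap {R : Type*} [CommRing R] {i : ℕ} (x : Fin i → R)
    {s t : ℕ} (h : s ≤ t) :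
    paramPowerIdeal x s ≤
      Submodule.comap (LinearMap.mulLeft R ((∏ j, x j) ^ (t - s))) (paramPowerIdeal x t) := by
  rw [paramPowerIdeal, Ideal.span_le]
  rintro _ ⟨j, rfl⟩
  have hdvd : x j ^ (t - s) ∣ (∏ k, x k) ^ (t - s) :=
    pow_dvd_pow_of_dvd (Finset.dvd_prod_of_mem x (Finset.mem_univ j)) _
  obtain ⟨r, hr⟩ := hdvd
  have key : (∏ k, x k) ^ (t - s) * x j ^ (s + 1) = r * x j ^ (t + 1) := by
    rw [hr, show t + 1 = (t - s) + (s + 1) by omega, pow_add]; ring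
  show (LinearMap.mulLeft R ((∏ j, x j) ^ (t - s))) (x j ^ (s + 1)) ∈ paramPowerIdeal x t
  rw [LinearMap.mulLeft_apply, key]
  exact Ideal.mul_mem_left _ r (Ideal.subset_span ⟨j, rfl⟩)

/-- The transition maps of the Čech direct system
`R/(x_1,…,x_i) → R/(x_1^2,…,x_i^2) → ⋯`, given by multiplication by powers of `x_1⋯x_i`;
their direct limit computes the local cohomology `H_I^i(R)` via the Čech complex. -/
def cechTransition {R : Type*} [CommRing R] {i : ℕ} (x : Fin i → R) :
    ∀ s t : ℕ, s ≤ t → (R ⧸ paramPowerIdeal x s) →ₗ[R] R ⧸ paramPowerIdeal x t :=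
  fun s t h => Submodule.mapQ _ _ (LinearMap.mulLeft R ((∏ j, x j) ^ (t - s)))
    (paramPowerIdeal_le_comap x h)

/-- The Čech model of the top local cohomology `H_I^i(R)`,
`I = (x_1,…,x_i)`:  `lim_s R/(x_1^s,…,x_i^s)`. -/
abbrev cechLocalCohomology {R : Type*} [CommRing R] {i : ℕ} (x : Fin i → R) : Type _ :=
  Module.DirectLimit (fun s : ℕ => R ⧸ paramPowerIdeal x s) (cechTransition x)

/-- The class `[z/(x_1⋯x_i)] ∈ H_I^i(R)`, represented at the first stage of the limit. -/
def cechClass {R : Type*} [CommRing R] {i : ℕ} (x : Fin i → R) (z : R) :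
    cechLocalCohomology x :=
  Module.DirectLimit.of R ℕ (fun s : ℕ => R ⧸ paramPowerIdeal x s) (cechTransition x) 0
    (Ideal.Quotient.mk (paramPowerIdeal x 0) z)

noncomputable def idealHeight {R : Type*} [CommRing R] (I : Ideal R) : ℕ∞ :=
  ⨅ (P : PrimeSpectrum R) (_ : I ≤ P.asIdeal), Order.height P

instance cechDirectedSystem {R : Type*} [CommRing R] {i : ℕ} (x : Fin i → R) :
    DirectedSystem (fun s : ℕ => R ⧸ paramPowerIdeal x s)
      (fun s t h => cechTransition x s t h) where
  map_self s q := by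
    induction q using Submodule.Quotient.induction_on with
    | _ a =>
      show Submodule.mapQ _ _ _ _ _ = _
      rw [Submodule.mapQ_apply, LinearMap.mulLeft_apply, Nat.sub_self, pow_zero, one_mul]
  map_map {s t u} hst htu q := by
    induction q using Submodule.Quotient.induction_on with
    | _ a =>
      show Submodule.mapQ _ _ _ _ (Submodule.mapQ _ _ _ _ _) = Submodule.mapQ _ _ _ _ _
      rw [Submodule.mapQ_apply, Submodule.mapQ_apply, Submodule.mapQ_apply,
        LinearMap.mulLeft_apply, LinearMap.mulLeft_apply, LinearMap.mulLeft_apply,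
        ← mul_assoc, ← pow_add, show s - t + (t - u) = s - u by omega]

/-- for a parameter ideal `I = (x_1,…,x_i)` in a Noetherian local ring, `z`
lies in the limit closure `I^lim = ⋃_{s≥1} ((x_1^s,…,x_i^s) : (x_1⋯x_i)^{s-1})` iff the
class `[z/(x_1⋯x_i)]` in the Čech local cohomology module `H_I^i(R)` vanishes. -/
theorem stmt1 {R : Type*} [CommRing R] [IsLocalRing R] [IsNoetherianRing R]
    {i : ℕ} (x : Fin i → R)
    (hparam : idealHeight (Ideal.span (Set.range x)) = (i : ℕ∞)) (z : R) :
    (∃ s ≥ 1, (∏ j, x j) ^ (s - 1) * z ∈ Ideal.span (Set.range fun j => x j ^ s)) ↔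
      cechClass x z = 0 := by
  constructor
  · rintro ⟨s, hs, hmem⟩
    have h0 : (0:ℕ) ≤ s - 1 := Nat.zero_le _
    have : cechTransition x 0 (s-1) h0 (Ideal.Quotient.mk (paramPowerIdeal x 0) z) = 0 := by
      show Submodule.mapQ _ _ _ _ (Submodule.Quotient.mk z) = 0
      rw [Submodule.mapQ_apply, LinearMap.mulLeft_apply]
      rw [Submodule.Quotient.mk_eq_zero]
      simpa [paramPowerIdeal, Nat.sub_add_cancel hs] using hmem
    calc cechClass x z
        = Module.DirectLimit.of R ℕ _ (cechTransition x) (s-1)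
            (cechTransition x 0 (s-1) h0 (Ideal.Quotient.mk (paramPowerIdeal x 0) z)) :=
          (Module.DirectLimit.of_f).symm
      _ = 0 := by rw [this, map_zero]
  · intro h
    obtain ⟨t, ht, hzero⟩ := Module.DirectLimit.of.zero_exact h
    refine ⟨t + 1, le_add_self, ?_⟩
    have : (∏ j, x j) ^ t * z ∈ paramPowerIdeal x t := by
      have := hzero
      rw [show cechTransition x 0 t ht (Ideal.Quotient.mk (paramPowerIdeal x 0) z)
          = Submodule.Quotient.mk ((∏ j, x j) ^ (t - 0) * z) from rfl,
        Submodule.Quotient.mk_eq_zero] at this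
      simpa using this
    simpa [paramPowerIdeal] using this


end
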